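/- Let L be a Lie algebra over a field K of characteristic 0, let U(L) be its universal enveloping algebra with canonical map i : L → U(L), and let e : Sym(L) → U(L) be the symmetrization map sending x₁⊙⋯⊙xₙ to (1/n!)·∑_{σ∈Σₙ} i(x_{σ(1)})⋯i(x_{σ(n)}). For every x ∈ L, let r_x : Sym(L) → Sym(L) be the unique derivation of the symmetric algebra with r_x(y) = [y,x] for y ∈ L. Then for every z ∈ Sym(L) and x ∈ L, one has e(r_x(z)) = [e(z), i(x)] = e(z)·i(x) − i(x)·e(z). -/

import Mathlib

/-!
STATEMENT 0: For the PBW symmetrization map `e : Sym(L) → U(L)` and, for `x ∈ L`, the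
(unique) derivation `r` of the symmetric algebra with `r(y) = [y,x]` for `y ∈ L`, one has
`e (r z) = [e z, i x] = e z * i x - i x * e z` for all `z ∈ Sym(L)`.

The symmetric algebra on the underlying vector space of `L` is realized as the quotient of
the tensor algebra by the commutation relation; `e` is characterized by its values on
products of generators (which span), and `r` by the Leibniz rule and its values on generators.
-/

noncomputable section

variable (K L : Type*) [Field K] [CharZero K] [LieRing L] [LieAlgebra K L]

/-- The relation defining the symmetric algebra as a quotient of the tensor algebra. -/
inductive SymRel : TensorAlgebra K L → TensorAlgebra K L → Prop
  | comm (x y : L) : SymRel (TensorAlgebra.ι K x * TensorAlgebra.ι K y)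
      (TensorAlgebra.ι K y * TensorAlgebra.ι K x)

/-- The symmetric algebra on the underlying vector space of `L`. -/
abbrev SymmL : Type _ := RingQuot (SymRel K L)

/-- The canonical linear inclusion `L → Sym(L)`. -/
def symι : L →ₗ[K] SymmL K L :=
  (RingQuot.mkAlgHom K (SymRel K L)).toLinearMap ∘ₗ TensorAlgebra.ι K

variable {K L}

/-- Commutator of a product of generators of `U(L)` with a generator. -/
lemma aux_prod_commutator (x : L) : ∀ (n : ℕ) (f : Fin n → L),
    (List.ofFn fun j => (UniversalEnvelopingAlgebra.ι K (f j) :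
        UniversalEnvelopingAlgebra K L)).prod * UniversalEnvelopingAlgebra.ι K x
      - UniversalEnvelopingAlgebra.ι K x *
        (List.ofFn fun j => (UniversalEnvelopingAlgebra.ι K (f j) :
          UniversalEnvelopingAlgebra K L)).prod
    = ∑ k : Fin n, (List.ofFn fun j =>
        (UniversalEnvelopingAlgebra.ι K (Function.update f k ⁅f k, x⁆ j) :
          UniversalEnvelopingAlgebra K L)).prod := by
  intro n
  induction n with
  | zero => intro f; simp
  | succ n ih =>
    intro f
    have hcomm : ∀ y : L, (UniversalEnvelopingAlgebra.ι K y : UniversalEnvelopingAlgebra K L)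
        * UniversalEnvelopingAlgebra.ι K x - UniversalEnvelopingAlgebra.ι K x *
          UniversalEnvelopingAlgebra.ι K y = UniversalEnvelopingAlgebra.ι K ⁅y, x⁆ := by
      intro y
      letI := @LieRing.ofAssociativeRing (UniversalEnvelopingAlgebra K L) _
      letI := LieAlgebra.ofAssociativeAlgebra (R := K) (A := UniversalEnvelopingAlgebra K L)
      rw [← Ring.lie_def, ← LieHom.map_lie]
    have hterm : ∀ k : Fin n,
        (List.ofFn fun j => (UniversalEnvelopingAlgebra.ι K
            (Function.update f k.succ ⁅f k.succ, x⁆ j) : UniversalEnvelopingAlgebra K L)).prod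
          = UniversalEnvelopingAlgebra.ι K (f 0) *
            (List.ofFn fun j : Fin n => (UniversalEnvelopingAlgebra.ι K
              (Function.update (fun i : Fin n => f i.succ) k ⁅f k.succ, x⁆ j) :
                UniversalEnvelopingAlgebra K L)).prod := by
      intro k
      rw [List.ofFn_succ, List.prod_cons,
        Function.update_of_ne (Fin.succ_ne_zero k).symm]
      congr 1
      exact congrArg (fun g : Fin n → L => (List.ofFn fun i =>
        (UniversalEnvelopingAlgebra.ι K (g i) : UniversalEnvelopingAlgebra K L)).prod)
        (Function.update_comp_eq_of_injective' f (Fin.succ_injective n) k ⁅f k.succ, x⁆)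
    rw [List.ofFn_succ, List.prod_cons, Fin.sum_univ_succ]
    have hzero :
        (List.ofFn fun j => (UniversalEnvelopingAlgebra.ι K
            (Function.update f 0 ⁅f 0, x⁆ j) : UniversalEnvelopingAlgebra K L)).prod
          = UniversalEnvelopingAlgebra.ι K ⁅f 0, x⁆ *
            (List.ofFn fun j : Fin n => (UniversalEnvelopingAlgebra.ι K (f j.succ) :
              UniversalEnvelopingAlgebra K L)).prod := by
      rw [List.ofFn_succ, List.prod_cons, Function.update_self]
      congr 1
    rw [hzero]
    simp_rw [hterm]
    rw [← Finset.mul_sum, ← ih (fun i => f i.succ), ← hcomm (f 0)]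
    noncomm_ring

lemma aux_mono_mul (n m : ℕ) (f : Fin n → L) (g : Fin m → L) :
    (List.ofFn fun j => symι K L (f j)).prod * (List.ofFn fun j => symι K L (g j)).prod
      = (List.ofFn fun j => symι K L (Fin.append f g j)).prod := by
  rw [show (List.ofFn fun j => symι K L (Fin.append f g j))
      = (List.ofFn fun i : Fin n => symι K L (Fin.append f g (Fin.castAdd m i)))
        ++ List.ofFn fun i : Fin m => symι K L (Fin.append f g (Fin.natAdd n i)) from
    List.ofFn_add, List.prod_append]
  simp [Fin.append_left, Fin.append_right]

lemma aux_monomial_span :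
    Submodule.span K {w : SymmL K L | ∃ (n : ℕ) (f : Fin n → L),
      w = (List.ofFn fun j => symι K L (f j)).prod} = ⊤ := by
  set S : Set (SymmL K L) := {w : SymmL K L | ∃ (n : ℕ) (f : Fin n → L),
      w = (List.ofFn fun j => symι K L (f j)).prod} with hS
  have h1 : (1 : SymmL K L) ∈ S := ⟨0, Fin.elim0, by simp⟩
  have hmulS : ∀ a ∈ Submodule.span K S, ∀ b ∈ Submodule.span K S,
      a * b ∈ Submodule.span K S := by
    intro a ha b hb
    have : a * b ∈ Submodule.span K S * Submodule.span K S :=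
      Submodule.mul_mem_mul ha hb
    rw [Submodule.span_mul_span] at this
    refine Submodule.span_le.mpr ?_ this
    rintro w hw
    rw [Set.mem_mul] at hw
    obtain ⟨u, ⟨n, f, rfl⟩, v, ⟨m, g, rfl⟩, rfl⟩ := hw
    exact Submodule.subset_span ⟨n + m, Fin.append f g, (aux_mono_mul (K := K) n m f g)⟩
  rw [Submodule.eq_top_iff']
  intro z
  obtain ⟨a, rfl⟩ := RingQuot.mkAlgHom_surjective K (SymRel K L) z
  induction a using TensorAlgebra.induction with
  | algebraMap r =>
    rw [AlgHom.commutes, Algebra.algebraMap_eq_smul_one]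
    exact Submodule.smul_mem _ _ (Submodule.subset_span h1)
  | ι y =>
    exact Submodule.subset_span ⟨1, fun _ => y, by simp [symι]⟩
  | mul a b ha hb =>
    rw [map_mul]
    exact hmulS _ ha _ hb
  | add a b ha hb =>
    rw [map_add]
    exact Submodule.add_mem _ ha hb

variable (K L)

theorem stmt0
    (e : SymmL K L →ₗ[K] UniversalEnvelopingAlgebra K L)
    (he : ∀ (n : ℕ) (f : Fin n → L),
      e (List.ofFn fun j => symι K L (f j)).prod
        = (n.factorial : K)⁻¹ •
            ∑ σ : Equiv.Perm (Fin n),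
              (List.ofFn fun j =>
                (UniversalEnvelopingAlgebra.ι K (f (σ j)) :
                  UniversalEnvelopingAlgebra K L)).prod)
    (x : L) (r : SymmL K L →ₗ[K] SymmL K L)
    (hleib : ∀ a b : SymmL K L, r (a * b) = r a * b + a * r b)
    (hr : ∀ y : L, r (symι K L y) = symι K L ⁅y, x⁆)
    (z : SymmL K L) :
    e (r z) = e z * UniversalEnvelopingAlgebra.ι K x
      - UniversalEnvelopingAlgebra.ι K x * e z := by
  classical
  -- `r` on monomials
  have hrmon : ∀ (n : ℕ) (f : Fin n → L),
      r (List.ofFn fun j => symι K L (f j)).prod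
        = ∑ k : Fin n,
            (List.ofFn fun j => symι K L (Function.update f k ⁅f k, x⁆ j)).prod := by
    intro n
    induction n with
    | zero =>
      intro f
      have h1 : r 1 = 0 := by
        have := hleib 1 1
        simp only [mul_one, one_mul] at this
        exact left_eq_add.mp this
      simp [h1]
    | succ n ih =>
      intro f
      have hterm : ∀ k : Fin n,
          (List.ofFn fun j => symι K L (Function.update f k.succ ⁅f k.succ, x⁆ j)).prod
            = symι K L (f 0) * (List.ofFn fun j : Fin n =>
                symι K L (Function.update (fun i : Fin n => f i.succ) k ⁅f k.succ, x⁆ j)).prod := by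
        intro k
        rw [List.ofFn_succ, List.prod_cons,
          Function.update_of_ne (Fin.succ_ne_zero k).symm]
        congr 1
        exact congrArg (fun g : Fin n → L => (List.ofFn fun i => symι K L (g i)).prod)
          (Function.update_comp_eq_of_injective' f (Fin.succ_injective n) k ⁅f k.succ, x⁆)
      have hzero :
          (List.ofFn fun j => symι K L (Function.update f 0 ⁅f 0, x⁆ j)).prod
            = symι K L ⁅f 0, x⁆ *
              (List.ofFn fun j : Fin n => symι K L (f j.succ)).prod := by
        rw [List.ofFn_succ, List.prod_cons, Function.update_self]
        congr 1
      rw [List.ofFn_succ, List.prod_cons, hleib, hr, ih (fun i => f i.succ),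
        Fin.sum_univ_succ, hzero]
      simp_rw [hterm]
      rw [Finset.mul_sum]
  -- the identity on monomials
  have key : ∀ (n : ℕ) (f : Fin n → L),
      e (r (List.ofFn fun j => symι K L (f j)).prod)
        = e (List.ofFn fun j => symι K L (f j)).prod * UniversalEnvelopingAlgebra.ι K x
          - UniversalEnvelopingAlgebra.ι K x *
            e (List.ofFn fun j => symι K L (f j)).prod := by
    intro n f
    rw [hrmon n f, map_sum, he n f]
    simp_rw [he n]
    rw [smul_mul_assoc, mul_smul_comm, ← smul_sub, Finset.sum_mul, Finset.mul_sum,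
      ← Finset.sum_sub_distrib, ← Finset.smul_sum]
    congr 1
    rw [Finset.sum_comm]
    refine Finset.sum_congr rfl fun σ _ => ?_
    rw [aux_prod_commutator x n (fun j => f (σ j))]
    refine (Fintype.sum_equiv σ _ _ fun p => ?_).symm
    congr 1
    exact (congrArg (fun g : Fin n → L => List.ofFn fun i =>
      (UniversalEnvelopingAlgebra.ι K (g i) : UniversalEnvelopingAlgebra K L))
      (Function.update_comp_eq_of_injective' f σ.injective p ⁅f (σ p), x⁆)).symm
  -- extend by linearity
  have hz : z ∈ Submodule.span K {w : SymmL K L | ∃ (n : ℕ) (f : Fin n → L),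
      w = (List.ofFn fun j => symι K L (f j)).prod} := by
    rw [aux_monomial_span]; trivial
  refine Submodule.span_induction ?_ ?_ ?_ ?_ hz
  · rintro w ⟨n, f, rfl⟩
    exact key n f
  · simp
  · intro a b _ _ ha hb
    rw [map_add, map_add, map_add, ha, hb]
    noncomm_ring
  · intro c a _ ha
    rw [map_smul, map_smul, map_smul, ha, smul_mul_assoc, mul_smul_comm, smul_sub]

end
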